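/- Let F ∈ Ž²(W, ℤ^n) be a Čech 2-cocycle on an open cover W of Z. Define the truncated complex with cochains in degree k being pairs (φ^{k1}, φ^{(k-1)2}) where φ^{k1} ∈ Č^k(W, ℤ^n) and φ^{(k-1)2} ∈ Č^{k-1}(W, M_n^u(ℤ)), with differential D̄_F(φ^{k1}, φ^{(k-1)2}) := (∂̌φ^{k1} + (−1)^{k+1} φ^{(k-1)2} ∪₁ F, ∂̌φ^{(k-1)2}). Then D̄_F ∘ D̄_F = 0. -/
import Mathlib


/-- A Čech `k`-cochain on a cover indexed by `ι` of a space `Z`, with values in `A`,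
modelled as a totally defined function of a `(k+1)`-tuple of indices and a point. -/
abbrev Cochain (ι Z A : Type*) (k : ℕ) := (Fin (k + 1) → ι) → Z → A

/-- The Čech differential `(∂̌φ)_{λ₀…λ_{k+1}} = Σ_l (-1)^l φ_{λ₀…λ̂_l…λ_{k+1}}`. -/
def cechD {ι Z A : Type*} [AddCommGroup A] {k : ℕ} (φ : Cochain ι Z A k) :
    Cochain ι Z A (k + 1) :=
  fun σ z => ∑ l : Fin (k + 2), ((-1 : ℤ) ^ (l : ℕ)) • φ (σ ∘ l.succAbove) z

/-- The Steenrod cochain `C(F)_{λ₀λ₁λ₂λ₃}(z)_{ij}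
  = F_{λ₀λ₁λ₂}(z)_i F_{λ₀λ₂λ₃}(z)_j − F_{λ₁λ₂λ₃}(z)_i F_{λ₀λ₁λ₃}(z)_j`. -/
def CFm {ι Z : Type*} {n : ℕ} (F : ι → ι → ι → Z → Fin n → ℤ) :
    ι → ι → ι → ι → Z → Fin n → Fin n → ℤ :=
  fun a b c d z i j => F a b c z i * F a c d z j - F b c d z i * F a b d z j

/-- `φ ∪₁ F` for a ℤⁿ-valued `k`-cochain `φ`:
`(φ ∪₁ F)_{λ₀…λ_{k+2}}(z) = Σ_l φ_{λ₀…λ_k}(z)_l F_{λ_k λ_{k+1} λ_{k+2}}(z)_l`. -/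
def cup1v {ι Z : Type*} {n k : ℕ} (φ : Cochain ι Z (Fin n → ℤ) k)
    (F : ι → ι → ι → Z → Fin n → ℤ) : Cochain ι Z ℤ (k + 2) :=
  fun σ z => ∑ l : Fin n,
    φ (fun i : Fin (k + 1) => σ (Fin.castLE (by omega) i)) z l *
      F (σ ⟨k, by omega⟩) (σ ⟨k + 1, by omega⟩) (σ ⟨k + 2, by omega⟩) z l

/-- `ψ ∪₁ F` for a matrix-valued `k`-cochain `ψ`:
`(ψ ∪₁ F)_{λ₀…λ_{k+2}}(z)_l
  = Σ_{i<j} ψ_{λ₀…λ_k}(z)_{ij} (F_{λ_k λ_{k+1} λ_{k+2}}(z)_i (e_l)_j − (e_l)_i F(z)_j)`. -/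
def cup1m {ι Z : Type*} {n k : ℕ} (ψ : Cochain ι Z (Fin n → Fin n → ℤ) k)
    (F : ι → ι → ι → Z → Fin n → ℤ) : Cochain ι Z (Fin n → ℤ) (k + 2) :=
  fun σ z l => ∑ i : Fin n, ∑ j : Fin n,
    if i < j then
      ψ (fun i' : Fin (k + 1) => σ (Fin.castLE (by omega) i')) z i j *
        (F (σ ⟨k, by omega⟩) (σ ⟨k + 1, by omega⟩) (σ ⟨k + 2, by omega⟩) z i *
            (if l = j then 1 else 0)
          - (if l = i then 1 else 0) *
            F (σ ⟨k, by omega⟩) (σ ⟨k + 1, by omega⟩) (σ ⟨k + 2, by omega⟩) z j)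
    else 0

/-- `ψ ∪₂ C(F)` for a matrix-valued `k`-cochain `ψ`:
`(ψ ∪₂ C(F))_{λ₀…λ_{k+3}}(z) = Σ_{i<j} ψ_{λ₀…λ_k}(z)_{ij} C(F)_{λ_k…λ_{k+3}}(z)_{ij}`. -/
def cup2m {ι Z : Type*} {n k : ℕ} (ψ : Cochain ι Z (Fin n → Fin n → ℤ) k)
    (F : ι → ι → ι → Z → Fin n → ℤ) : Cochain ι Z ℤ (k + 3) :=
  fun σ z => ∑ i : Fin n, ∑ j : Fin n,
    if i < j then
      ψ (fun i' : Fin (k + 1) => σ (Fin.castLE (by omega) i')) z i j *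
        CFm F (σ ⟨k, by omega⟩) (σ ⟨k + 1, by omega⟩) (σ ⟨k + 2, by omega⟩)
          (σ ⟨k + 3, by omega⟩) z i j
    else 0

/-- The differential `D̄_F` of the truncated dimensionally reduced complex, on a
pair `(φ^{k1}, φ^{(k-1)2})` of Čech degrees `(K+1, K)` (so `k = K+1`):
`D̄_F(φ^{k1}, φ^{(k-1)2}) = (∂̌φ^{k1} + (−1)^{k+1} φ^{(k-1)2} ∪₁ F, ∂̌φ^{(k-1)2})`. -/
def DFbar {ι Z : Type*} {n : ℕ} (K : ℕ) (F : ι → ι → ι → Z → Fin n → ℤ)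
    (p : Cochain ι Z (Fin n → ℤ) (K + 1) × Cochain ι Z (Fin n → Fin n → ℤ) K) :
    Cochain ι Z (Fin n → ℤ) (K + 2) × Cochain ι Z (Fin n → Fin n → ℤ) (K + 1) :=
  (cechD p.1 + ((-1 : ℤ) ^ (K + 2)) • cup1m p.2 F, cechD p.2)


private lemma sa_val {n : ℕ} (l : Fin (n+1)) (m : Fin n) :
    ((l.succAbove m : Fin (n+1)) : ℕ) = if (m:ℕ) < (l:ℕ) then (m:ℕ) else (m:ℕ)+1 := by
  simp only [Fin.succAbove, Fin.lt_def, Fin.coe_castSucc]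
  split_ifs <;> simp

private def swp {k : ℕ} (p : Fin (k+3) × Fin (k+2)) : Fin (k+3) × Fin (k+2) :=
  if h : (p.2:ℕ) < (p.1:ℕ) then (p.2.castSucc, ⟨(p.1:ℕ)-1, by have := p.1.isLt; omega⟩)
  else (p.2.succ, ⟨(p.1:ℕ), by have := p.2.isLt; omega⟩)

private lemma comp_eq {ι : Type*} {k : ℕ} (σ : Fin (k+3) → ι) (l l' : Fin (k+3)) (m m' : Fin (k+2))
    (h : ∀ x : Fin (k+1), ((l.succAbove (m.succAbove x)):ℕ) = ((l'.succAbove (m'.succAbove x)):ℕ)) :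
    (σ ∘ l.succAbove) ∘ m.succAbove = (σ ∘ l'.succAbove) ∘ m'.succAbove :=
  funext fun x => congrArg σ (Fin.ext (h x))

private lemma cechD_cechD {ι Z A : Type*} [AddCommGroup A] {k : ℕ} (φ : Cochain ι Z A k) :
    cechD (cechD φ) = 0 := by
  funext σ z
  have h1 : (cechD (cechD φ)) σ z
      = ∑ p ∈ (Finset.univ ×ˢ Finset.univ : Finset (Fin (k+3) × Fin (k+2))),
          ((-1:ℤ)^((p.1:ℕ)+(p.2:ℕ))) • φ ((σ ∘ p.1.succAbove) ∘ p.2.succAbove) z := by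
    rw [Finset.sum_product]
    simp only [cechD, Finset.smul_sum, smul_smul, ← pow_add]
  rw [h1]
  refine Finset.sum_ninvolution swp ?_ ?_ (fun _ => Finset.mem_univ _) ?_
  · intro p
    obtain ⟨l, m⟩ := p
    by_cases h : (m:ℕ) < (l:ℕ)
    · simp only [swp, dif_pos h]
      rw [comp_eq σ l m.castSucc m ⟨(l:ℕ)-1, by have := l.isLt; omega⟩
        (fun x => by simp only [sa_val, Fin.coe_castSucc]; split_ifs <;> omega)]
      rw [← add_smul]
      have hs : ((-1:ℤ)^((l:ℕ)+(m:ℕ)) + (-1:ℤ)^((m.castSucc:ℕ)+((l:ℕ)-1))) = 0 := by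
        have he : (l:ℕ)+(m:ℕ) = ((m.castSucc:ℕ)+((l:ℕ)-1))+1 := by
          simp only [Fin.coe_castSucc]; omega
        rw [he, pow_succ]; ring
      rw [hs, zero_smul]
    · simp only [swp, dif_neg h]
      rw [comp_eq σ l m.succ m ⟨(l:ℕ), by have := m.isLt; omega⟩
        (fun x => by simp only [sa_val, Fin.val_succ]; split_ifs <;> omega)]
      rw [← add_smul]
      have hs : ((-1:ℤ)^((l:ℕ)+(m:ℕ)) + (-1:ℤ)^((m.succ:ℕ)+(l:ℕ))) = 0 := by
        have he : (m.succ:ℕ)+(l:ℕ) = ((l:ℕ)+(m:ℕ))+1 := by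
          simp only [Fin.val_succ]; omega
        rw [he, pow_succ]; ring
      rw [hs, zero_smul]
  · intro p _
    obtain ⟨l, m⟩ := p
    by_cases h : (m:ℕ) < (l:ℕ)
    · simp only [swp, dif_pos h]
      intro hc
      apply_fun (fun q => (q.1:ℕ)) at hc
      simp only [Fin.coe_castSucc] at hc
      omega
    · simp only [swp, dif_neg h]
      intro hc
      apply_fun (fun q => (q.1:ℕ)) at hc
      simp only [Fin.val_succ] at hc
      omega
  · intro p
    obtain ⟨l, m⟩ := p
    by_cases h : (m:ℕ) < (l:ℕ)
    · simp only [swp, dif_pos h]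
      rw [dif_neg (by simp only [Fin.coe_castSucc]; omega)]
      refine Prod.ext (Fin.ext ?_) (Fin.ext ?_) <;>
        simp only [Fin.val_succ, Fin.coe_castSucc] <;> omega
    · simp only [swp, dif_neg h]
      rw [dif_pos (by simp only [Fin.val_succ]; omega)]
      refine Prod.ext (Fin.ext ?_) (Fin.ext ?_) <;>
        simp only [Fin.val_succ, Fin.coe_castSucc] <;> omega

private lemma core_abs {k : ℕ} (A : Fin (k+4) → ℤ) (B : Fin (k+2) → ℤ) (C : Fin (k+4) → ℤ)
    (c g1 g2 g3 A0 : ℤ)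
    (hAB : ∀ t : Fin (k+1), A t.castSucc.castSucc.castSucc = B t.castSucc)
    (hC : ∀ t : Fin (k+1), C t.castSucc.castSucc.castSucc = c)
    (h1 : A (Fin.last (k+1)).castSucc.castSucc = A0) (h2 : A (Fin.last (k+2)).castSucc = A0)
    (h3 : A (Fin.last (k+3)) = A0) (h4 : B (Fin.last (k+1)) = A0)
    (hc1 : C (Fin.last (k+1)).castSucc.castSucc = g1) (hc2 : C (Fin.last (k+2)).castSucc = g2)
    (hc3 : C (Fin.last (k+3)) = g3) (hrel : c - g1 + g2 - g3 = 0) :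
    ∑ t : Fin (k+4), (-1:ℤ)^(t:ℕ) * (A t * C t)
      = (∑ t : Fin (k+2), (-1:ℤ)^(t:ℕ) * B t) * c := by
  rw [Fin.sum_univ_castSucc (n:=k+3), Fin.sum_univ_castSucc (n:=k+2),
    Fin.sum_univ_castSucc (n:=k+1),
    Fin.sum_univ_castSucc (n:=k+1) (f := fun t : Fin (k+2) => (-1:ℤ)^(t:ℕ) * B t)]
  simp only [Fin.coe_castSucc, Fin.val_last, hAB, hC, h1, h2, h3, h4, hc1, hc2, hc3]
  rw [add_mul, Finset.sum_mul]
  have hterm : ∀ t ∈ (Finset.univ : Finset (Fin (k+1))),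
      (-1:ℤ)^(t:ℕ) * (B t.castSucc * c) = ((-1:ℤ)^(t:ℕ) * B t.castSucc) * c :=
    fun t _ => by ring
  rw [Finset.sum_congr rfl hterm]
  linear_combination (-(-1:ℤ)^(k+1) * A0) * hrel

private lemma core {ι : Type*} {k : ℕ} (σ : Fin (k+4) → ι) (a : (Fin (k+1) → ι) → ℤ)
    (G : ι → ι → ι → ℤ)
    (hG : ∀ x y u v : ι, G y u v - G x u v + G x y v - G x y u = 0) :
    ∑ t : Fin (k+4), (-1:ℤ)^(t:ℕ) *
        (a (fun m : Fin (k+1) => σ (t.succAbove (Fin.castLE (by omega) m))) *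
          G (σ (t.succAbove ⟨k, by omega⟩)) (σ (t.succAbove ⟨k+1, by omega⟩))
            (σ (t.succAbove ⟨k+2, by omega⟩)))
      = (∑ t : Fin (k+2), (-1:ℤ)^(t:ℕ) *
          a (fun m : Fin (k+1) => σ (Fin.castLE (by omega) (t.succAbove m))))
        * G (σ ⟨k+1, by omega⟩) (σ ⟨k+2, by omega⟩) (σ ⟨k+3, by omega⟩) := by
  refine core_abs
    (fun t => a (fun m : Fin (k+1) => σ (t.succAbove (Fin.castLE (by omega) m))))
    (fun t => a (fun m : Fin (k+1) => σ (Fin.castLE (by omega) (t.succAbove m))))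
    (fun t => G (σ (t.succAbove ⟨k, by omega⟩)) (σ (t.succAbove ⟨k+1, by omega⟩))
      (σ (t.succAbove ⟨k+2, by omega⟩)))
    (G (σ ⟨k+1, by omega⟩) (σ ⟨k+2, by omega⟩) (σ ⟨k+3, by omega⟩))
    (G (σ ⟨k, by omega⟩) (σ ⟨k+2, by omega⟩) (σ ⟨k+3, by omega⟩))
    (G (σ ⟨k, by omega⟩) (σ ⟨k+1, by omega⟩) (σ ⟨k+3, by omega⟩))
    (G (σ ⟨k, by omega⟩) (σ ⟨k+1, by omega⟩) (σ ⟨k+2, by omega⟩))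
    (a (fun m : Fin (k+1) => σ (Fin.castLE (by omega) m)))
    ?_ ?_ ?_ ?_ ?_ ?_ ?_ ?_ ?_ ?_
  · intro t
    refine congrArg a (funext fun m => congrArg σ (Fin.ext ?_))
    simp only [sa_val, Fin.coe_castSucc, Fin.coe_castLE] <;> split_ifs <;> omega
  · intro t
    refine congrArg₂ (fun x y => G x y _) ?_ ?_ |>.trans (congrArg _ ?_) <;>
      refine congrArg σ (Fin.ext ?_) <;>
      simp only [sa_val, Fin.coe_castSucc, Fin.val_last] <;> split_ifs <;> omega
  · refine congrArg a (funext fun m => congrArg σ (Fin.ext ?_))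
    simp only [sa_val, Fin.coe_castSucc, Fin.val_last, Fin.coe_castLE] <;> split_ifs <;> omega
  · refine congrArg a (funext fun m => congrArg σ (Fin.ext ?_))
    simp only [sa_val, Fin.coe_castSucc, Fin.val_last, Fin.coe_castLE] <;> split_ifs <;> omega
  · refine congrArg a (funext fun m => congrArg σ (Fin.ext ?_))
    simp only [sa_val, Fin.coe_castSucc, Fin.val_last, Fin.coe_castLE] <;> split_ifs <;> omega
  · refine congrArg a (funext fun m => congrArg σ (Fin.ext ?_))
    simp only [sa_val, Fin.coe_castSucc, Fin.val_last, Fin.coe_castLE] <;> split_ifs <;> omega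
  · refine congrArg₂ (fun x y => G x y _) ?_ ?_ |>.trans (congrArg _ ?_) <;>
      refine congrArg σ (Fin.ext ?_) <;>
      simp only [sa_val, Fin.coe_castSucc, Fin.val_last] <;> split_ifs <;> omega
  · refine congrArg₂ (fun x y => G x y _) ?_ ?_ |>.trans (congrArg _ ?_) <;>
      refine congrArg σ (Fin.ext ?_) <;>
      simp only [sa_val, Fin.coe_castSucc, Fin.val_last] <;> split_ifs <;> omega
  · refine congrArg₂ (fun x y => G x y _) ?_ ?_ |>.trans (congrArg _ ?_) <;>
      refine congrArg σ (Fin.ext ?_) <;>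
      simp only [sa_val, Fin.coe_castSucc, Fin.val_last] <;> split_ifs <;> omega
  · exact hG (σ ⟨k, by omega⟩) (σ ⟨k+1, by omega⟩) (σ ⟨k+2, by omega⟩) (σ ⟨k+3, by omega⟩)

private lemma leibniz {ι Z : Type*} {n k : ℕ} (F : ι → ι → ι → Z → Fin n → ℤ)
    (hF : ∀ (a b c d : ι) (z : Z) (l : Fin n),
      F b c d z l - F a c d z l + F a b d z l - F a b c z l = 0)
    (ψ : Cochain ι Z (Fin n → Fin n → ℤ) k) :
    cechD (cup1m ψ F) = cup1m (cechD ψ) F := by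
  funext σ z l
  show (cechD (cup1m ψ F)) σ z l = (cup1m (cechD ψ) F) σ z l
  simp only [cechD, cup1m, Function.comp_apply, Finset.sum_apply, Pi.smul_apply, smul_eq_mul,
    Finset.mul_sum, Function.comp_def]
  rw [Finset.sum_comm]
  refine Finset.sum_congr rfl fun i _ => ?_
  rw [Finset.sum_comm]
  refine Finset.sum_congr rfl fun j _ => ?_
  simp only [mul_ite, mul_zero]
  by_cases hij : i < j
  · simp only [if_pos hij]
    have hG : ∀ x y u v : ι,
        ((if l = j then F y u v z i * 1 else 0) - (if l = i then 1 else 0) * F y u v z j)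
        - ((if l = j then F x u v z i * 1 else 0) - (if l = i then 1 else 0) * F x u v z j)
        + ((if l = j then F x y v z i * 1 else 0) - (if l = i then 1 else 0) * F x y v z j)
        - ((if l = j then F x y u z i * 1 else 0) - (if l = i then 1 else 0) * F x y u z j)
          = 0 := by
      intro x y u v
      split_ifs <;> ring_nf <;> linarith [hF x y u v z i, hF x y u v z j]
    exact core σ (fun τ => ψ τ z i j)
      (fun x y u => (if l = j then F x y u z i * 1 else 0) - (if l = i then 1 else 0) * F x y u z j)
      hG
  · simp only [if_neg hij, Finset.sum_const_zero]

private lemma cechD_add_apply {ι Z A : Type*} [AddCommGroup A] {k : ℕ}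
    (φ₁ φ₂ : Cochain ι Z A k) (σ : Fin (k+2) → ι) (z : Z) :
    cechD (φ₁ + φ₂) σ z = cechD φ₁ σ z + cechD φ₂ σ z := by
  simp only [cechD, Pi.add_apply, smul_add, Finset.sum_add_distrib]

private lemma cechD_smul_apply {ι Z : Type*} {n k : ℕ} (c : ℤ)
    (φ : Cochain ι Z (Fin n → ℤ) k) (σ : Fin (k+2) → ι) (z : Z) (l : Fin n) :
    cechD (c • φ) σ z l = c * cechD φ σ z l := by
  simp only [cechD, Pi.smul_apply, Finset.sum_apply, smul_eq_mul]
  rw [Finset.mul_sum]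
  exact Finset.sum_congr rfl fun t _ => by ring

/- STATEMENT 3: `D̄_F ∘ D̄_F = 0` for a 2-cocycle `F`. -/
theorem stmt_3 {ι Z : Type*} {n : ℕ} (K : ℕ)
    (F : ι → ι → ι → Z → Fin n → ℤ)
    (hF : ∀ (a b c d : ι) (z : Z) (l : Fin n),
      F b c d z l - F a c d z l + F a b d z l - F a b c z l = 0)
    (p : Cochain ι Z (Fin n → ℤ) (K + 1) × Cochain ι Z (Fin n → Fin n → ℤ) K) :
    DFbar (K + 1) F (DFbar K F p) = 0 := by
  have hl := leibniz F hF p.2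
  have hdd2 : cechD (cechD p.2) = 0 := cechD_cechD p.2
  refine Prod.ext ?_ ?_
  · show cechD (cechD p.1 + ((-1:ℤ)^(K+2)) • cup1m p.2 F)
        + ((-1:ℤ)^(K+1+2)) • cup1m (cechD p.2) F = (0 : _ × _).1
    funext σ z l
    have h1 := cechD_add_apply (cechD p.1) (((-1:ℤ)^(K+2)) • cup1m p.2 F) σ z
    have h2 := cechD_smul_apply ((-1:ℤ)^(K+2)) (cup1m p.2 F) σ z l
    have h3 : cechD (cechD p.1) σ z l = 0 := by rw [cechD_cechD p.1]; rfl
    have h4 : cechD (cup1m p.2 F) σ z l = cup1m (cechD p.2) F σ z l := by rw [hl]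
    have h5 : ((-1:ℤ)^(K+1+2)) = -((-1:ℤ)^(K+2)) := by
      rw [show K+1+2 = (K+2)+1 from by omega, pow_succ]; ring
    calc (cechD (cechD p.1 + ((-1:ℤ)^(K+2)) • cup1m p.2 F)
            + ((-1:ℤ)^(K+1+2)) • cup1m (cechD p.2) F) σ z l
        = cechD (cechD p.1 + ((-1:ℤ)^(K+2)) • cup1m p.2 F) σ z l
            + ((-1:ℤ)^(K+1+2)) * cup1m (cechD p.2) F σ z l := by
          simp [Pi.add_apply, Pi.smul_apply, smul_eq_mul]
      _ = (cechD (cechD p.1) σ z + cechD (((-1:ℤ)^(K+2)) • cup1m p.2 F) σ z) l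
            + ((-1:ℤ)^(K+1+2)) * cup1m (cechD p.2) F σ z l := by rw [h1]
      _ = cechD (cechD p.1) σ z l + ((-1:ℤ)^(K+2)) * cechD (cup1m p.2 F) σ z l
            + ((-1:ℤ)^(K+1+2)) * cup1m (cechD p.2) F σ z l := by
          simp only [Pi.add_apply, h2]
      _ = 0 := by rw [h3, h4, h5]; ring
  · show cechD (cechD p.2) = (0 : _ × _).2
    rw [hdd2]; rfl
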